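/- Let R be a finite (not necessarily unital, not necessarily commutative) ring. Then Pr(R) ≥ (1/|K(R, R)|) · (1 + (|K(R, R)| − 1)/|R : Z(R)|). In particular, if R is non-commutative then Pr(R) > 1/|K(R, R)|. -/

import Mathlib

open scoped Pointwise

/-- The probability that a randomly chosen pair, one element from `S` and one from `T`,
commutes (multiplicatively). For a subring `S` of a finite ring `R` this gives
`Pr(S, R) = relCommProb R S Set.univ`, `Pr(R) = relCommProb R Set.univ Set.univ`, etc. -/
noncomputable def relCommProb (R : Type*) [NonUnitalRing R] (S T : Set R) : ℚ :=
  (Nat.card {p : S × T // (p.1 : R) * (p.2 : R) = (p.2 : R) * (p.1 : R)} : ℚ) /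
    ((Nat.card S : ℚ) * (Nat.card T : ℚ))

/-- `C_S(r)`: the centralizer of `r` in the subring `S`, as an additive subgroup of `R`.
Taking `S = ⊤` gives `C_R(r)`. -/
def centIn {R : Type*} [NonUnitalRing R] (S : NonUnitalSubring R) (r : R) : AddSubgroup R where
  carrier := {x | x ∈ S ∧ x * r = r * x}
  zero_mem' := ⟨S.zero_mem, by rw [zero_mul, mul_zero]⟩
  add_mem' := by
    rintro a b ⟨ha, ha'⟩ ⟨hb, hb'⟩
    exact ⟨S.add_mem ha hb, by rw [add_mul, mul_add, ha', hb']⟩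
  neg_mem' := by
    rintro a ⟨ha, ha'⟩
    exact ⟨S.neg_mem ha, by rw [neg_mul, mul_neg, ha']⟩

/-- `Z(S, R)`: the elements of the subring `S` commuting with every element of `R`,
as an additive subgroup of `R`.  Taking `S = ⊤` gives the center `Z(R)`. -/
def zCenter {R : Type*} [NonUnitalRing R] (S : NonUnitalSubring R) : AddSubgroup R where
  carrier := {x | x ∈ S ∧ ∀ r : R, x * r = r * x}
  zero_mem' := ⟨S.zero_mem, fun r => by rw [zero_mul, mul_zero]⟩
  add_mem' := by
    rintro a b ⟨ha, ha'⟩ ⟨hb, hb'⟩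
    exact ⟨S.add_mem ha hb, fun r => by rw [add_mul, mul_add, ha' r, hb' r]⟩
  neg_mem' := by
    rintro a ⟨ha, ha'⟩
    exact ⟨S.neg_mem ha, fun r => by rw [neg_mul, mul_neg, ha' r]⟩

/-- `K(S, R)`: the set of additive commutators `s*r - r*s` with `s ∈ S`, `r ∈ R`. -/
def kSet {R : Type*} [NonUnitalRing R] (S : NonUnitalSubring R) : Set R :=
  {x | ∃ s ∈ S, ∃ r : R, x = s * r - r * s}

/-- `[S, R]`: the additive subgroup of `(R, +)` generated by `K(S, R)`. -/
def commSub {R : Type*} [NonUnitalRing R] (S : NonUnitalSubring R) : AddSubgroup R :=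
  AddSubgroup.closure (kSet S)

/-- `[x, R]`: the additive subgroup of all commutators `x*y - y*x`, `y ∈ R`. -/
def elemComm {R : Type*} [NonUnitalRing R] (x : R) : AddSubgroup R where
  carrier := {z | ∃ y : R, z = x * y - y * x}
  zero_mem' := ⟨0, by simp⟩
  add_mem' := by
    rintro a b ⟨y, rfl⟩ ⟨z, rfl⟩
    exact ⟨y + z, by rw [mul_add, add_mul]; abel⟩
  neg_mem' := by
    rintro a ⟨y, rfl⟩
    exact ⟨-y, by rw [mul_neg, neg_mul]; abel⟩

/-- the commutator map `y ↦ x*y - y*x` as an additive hom -/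
def commHom {R : Type*} [NonUnitalRing R] (x : R) : R →+ R where
  toFun y := x * y - y * x
  map_zero' := by simp
  map_add' a b := by simp only [mul_add, add_mul]; abel

lemma card_cent_mul {R : Type*} [NonUnitalRing R] [Fintype R] (x : R) :
    Nat.card {y : R // x * y = y * x} * Nat.card (elemComm x) = Nat.card R := by
  have h1 : Nat.card R = Nat.card (R ⧸ (commHom x).ker) * Nat.card (commHom x).ker :=
    AddSubgroup.card_eq_card_quotient_mul_card_addSubgroup _
  have e1 : (R ⧸ (commHom x).ker) ≃ (commHom x).range :=
    (QuotientAddGroup.quotientKerEquivRange (commHom x)).toEquiv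
  have e2 : (commHom x).range ≃ (elemComm x) := by
    apply Equiv.subtypeEquivRight
    intro z
    simp only [AddMonoidHom.mem_range, commHom, AddMonoidHom.coe_mk, ZeroHom.coe_mk]
    constructor
    · rintro ⟨y, rfl⟩; exact ⟨y, rfl⟩
    · rintro ⟨y, hy⟩; exact ⟨y, hy.symm⟩
  have e3 : ((commHom x).ker) ≃ {y : R // x * y = y * x} := by
    apply Equiv.subtypeEquivRight
    intro y
    simp [commHom, AddMonoidHom.mem_ker, sub_eq_zero]
  calc Nat.card {y : R // x * y = y * x} * Nat.card (elemComm x)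
      = Nat.card (commHom x).ker * Nat.card (elemComm x) := by rw [Nat.card_congr e3]
    _ = Nat.card (commHom x).ker * Nat.card (commHom x).range := by rw [Nat.card_congr e2]
    _ = Nat.card (R ⧸ (commHom x).ker) * Nat.card (commHom x).ker := by
        rw [Nat.card_congr e1, mul_comm]
    _ = Nat.card R := h1.symm

/-- `Pr(R) ≥ (1/|K(R, R)|)(1 + (|K(R, R)| − 1)/|R : Z(R)|)`; in particular, if `R` is
non-commutative then `Pr(R) > 1/|K(R, R)|`. -/
theorem commProb_ge_kSet {R : Type*} [NonUnitalRing R] [Fintype R] :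
    relCommProb R Set.univ Set.univ ≥
      (1 / (Nat.card (kSet (⊤ : NonUnitalSubring R)) : ℚ)) *
        (1 + ((Nat.card (kSet (⊤ : NonUnitalSubring R)) : ℚ) - 1) /
          ((zCenter (⊤ : NonUnitalSubring R)).index : ℚ)) ∧
    ((∃ a b : R, a * b ≠ b * a) →
      relCommProb R Set.univ Set.univ >
        1 / (Nat.card (kSet (⊤ : NonUnitalSubring R)) : ℚ)) := by
  classical
  set K := Nat.card (kSet (⊤ : NonUnitalSubring R)) with hKdef
  set Zg := zCenter (⊤ : NonUnitalSubring R) with hZgdef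
  set n := Nat.card R with hndef
  set Zc := Nat.card Zg with hZcdef
  set i := Zg.index with hidef
  set c : R → ℕ := fun x => Nat.card {y : R // x * y = y * x} with hcdef
  have hn : 0 < n := Nat.card_pos
  -- K is positive
  have hKfin : (kSet (⊤ : NonUnitalSubring R)).Finite := Set.toFinite _
  have h0K : (0 : R) ∈ kSet (⊤ : NonUnitalSubring R) := ⟨0, trivial, 0, by simp⟩
  have hKpos : 0 < K := by
    have : Nonempty (kSet (⊤ : NonUnitalSubring R)) := ⟨⟨0, h0K⟩⟩
    exact Nat.card_pos
  -- index relation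
  have hidx : i * Zc = n := AddSubgroup.index_mul_card Zg
  have hipos : 0 < i := by
    rcases Nat.eq_zero_or_pos i with h | h
    · rw [h, zero_mul] at hidx; omega
    · exact h
  have hZcpos : 0 < Zc := by
    rcases Nat.eq_zero_or_pos Zc with h | h
    · rw [h, mul_zero] at hidx; omega
    · exact h
  -- numerator as a sum of centralizer sizes
  set N := Nat.card {p : ↥(Set.univ : Set R) × ↥(Set.univ : Set R) //
      (p.1 : R) * (p.2 : R) = (p.2 : R) * (p.1 : R)} with hNdef
  have hN : N = ∑ x : R, c x := by
    have e1 : {p : ↥(Set.univ : Set R) × ↥(Set.univ : Set R) //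
        (p.1 : R) * (p.2 : R) = (p.2 : R) * (p.1 : R)} ≃
        {p : R × R // p.1 * p.2 = p.2 * p.1} :=
      Equiv.subtypeEquiv (Equiv.prodCongr (Equiv.Set.univ R) (Equiv.Set.univ R))
        (fun p => Iff.rfl)
    have e2 : {p : R × R // p.1 * p.2 = p.2 * p.1} ≃
        Σ x : R, {y : R // x * y = y * x} :=
      Equiv.subtypeProdEquivSigmaSubtype (fun x y : R => x * y = y * x)
    rw [hNdef, Nat.card_congr (e1.trans e2)]
    simp [Nat.card_eq_fintype_card, Fintype.card_sigma, hcdef]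
  -- each centralizer satisfies n ≤ K * c x
  have hcle : ∀ x : R, n ≤ K * c x := by
    intro x
    have h1 : c x * Nat.card (elemComm x) = n := card_cent_mul x
    have h2 : Nat.card (elemComm x) ≤ K := by
      rw [hKdef]
      have hsub : ((elemComm x : Set R)) ⊆ kSet (⊤ : NonUnitalSubring R) := by
        rintro z ⟨y, rfl⟩
        exact ⟨x, trivial, y, rfl⟩
      calc Nat.card (elemComm x) = (elemComm x : Set R).ncard := by
            rw [← Nat.card_coe_set_eq]; rfl
        _ ≤ (kSet (⊤ : NonUnitalSubring R)).ncard := Set.ncard_le_ncard hsub hKfin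
        _ = Nat.card (kSet (⊤ : NonUnitalSubring R)) := (Nat.card_coe_set_eq _).symm
    calc n = c x * Nat.card (elemComm x) := h1.symm
      _ ≤ c x * K := Nat.mul_le_mul_left _ h2
      _ = K * c x := mul_comm _ _
  -- central elements have full centralizer
  have hcz : ∀ x : R, x ∈ Zg → c x = n := by
    intro x hx
    exact Nat.card_congr (Equiv.subtypeUnivEquiv (fun y => hx.2 y))
  -- count of central elements
  have hZfil : (Finset.univ.filter (fun x : R => x ∈ Zg)).card = Zc := by
    rw [hZcdef, Nat.card_eq_fintype_card]
    exact (Fintype.card_subtype _).symm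
  have hZle : Zc ≤ n := by
    rw [← hZfil, hndef, Nat.card_eq_fintype_card]
    exact Finset.card_filter_le _ _
  -- the key counting inequality, in ℕ
  have hKN : Zc * (K * n) + (n - Zc) * n ≤ K * N := by
    have : (∑ x : R, if x ∈ Zg then K * n else n) ≤ ∑ x : R, K * c x := by
      apply Finset.sum_le_sum
      intro x _
      by_cases hx : x ∈ Zg
      · simp [hx, hcz x hx]
      · simp only [hx, if_false]
        exact hcle x
    rw [Finset.sum_ite, Finset.sum_const, Finset.sum_const, smul_eq_mul, smul_eq_mul,
      hZfil] at this
    have hcompl : (Finset.univ.filter (fun x : R => ¬ x ∈ Zg)).card = n - Zc := by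
      have := Finset.card_filter_add_card_filter_not (s := (Finset.univ : Finset R))
        (fun x : R => x ∈ Zg)
      rw [hZfil, Finset.card_univ] at this
      rw [hndef, Nat.card_eq_fintype_card]
      omega
    rw [hcompl] at this
    calc Zc * (K * n) + (n - Zc) * n ≤ ∑ x : R, K * c x := this
      _ = K * N := by rw [hN, Finset.mul_sum]
  -- pass to ℚ
  have hnq : (0 : ℚ) < n := by exact_mod_cast hn
  have hKq : (0 : ℚ) < K := by exact_mod_cast hKpos
  have hiq : (0 : ℚ) < i := by exact_mod_cast hipos
  have hidxq : (i : ℚ) * Zc = n := by exact_mod_cast hidx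
  have hKNq : (Zc : ℚ) * (K * n) + ((n : ℚ) - Zc) * n ≤ K * N := by
    have h0 := hKN
    calc (Zc : ℚ) * (K * n) + ((n : ℚ) - Zc) * n
        = ((Zc * (K * n) + (n - Zc) * n : ℕ) : ℚ) := by push_cast [Nat.cast_sub hZle]; ring
      _ ≤ ((K * N : ℕ) : ℚ) := by exact_mod_cast h0
      _ = (K : ℚ) * N := by push_cast; ring
  -- compute the probability
  have hPr : relCommProb R Set.univ Set.univ = (N : ℚ) / ((n : ℚ) * n) := by
    rw [relCommProb, ← hNdef]
    congr 2 <;> rw [Nat.card_congr (Equiv.Set.univ R)]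
  have hmain : relCommProb R Set.univ Set.univ ≥
      (1 / (K : ℚ)) * (1 + ((K : ℚ) - 1) / (i : ℚ)) := by
    rw [hPr, ge_iff_le]
    have hrhs : (1 / (K : ℚ)) * (1 + ((K : ℚ) - 1) / (i : ℚ)) =
        ((n : ℚ) + ((K : ℚ) - 1) * Zc) / ((K : ℚ) * n) := by
      field_simp
      linear_combination (1 - (K : ℚ)) * hidxq
    rw [hrhs, div_le_div_iff₀ (by positivity) (by positivity)]
    nlinarith [mul_le_mul_of_nonneg_left hKNq (le_of_lt hnq)]
  refine ⟨hmain, ?_⟩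
  rintro ⟨a, b, hab⟩
  have hK2 : 2 ≤ K := by
    rw [hKdef, Nat.card_coe_set_eq]
    have h1 : a * b - b * a ∈ kSet (⊤ : NonUnitalSubring R) := ⟨a, trivial, b, rfl⟩
    have hne : a * b - b * a ≠ (0 : R) := fun h => hab (by rwa [sub_eq_zero] at h)
    have := (Set.one_lt_ncard (s := kSet (⊤ : NonUnitalSubring R)) hKfin).2
      ⟨_, h1, _, h0K, hne⟩
    omega
  have hstep : (1 / (K : ℚ)) < (1 / (K : ℚ)) * (1 + ((K : ℚ) - 1) / (i : ℚ)) := by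
    have hpos : 0 < ((K : ℚ) - 1) / (i : ℚ) := by
      apply div_pos _ hiq
      have : (2 : ℚ) ≤ K := by exact_mod_cast hK2
      linarith
    nlinarith [one_div_pos.2 hKq]
  exact lt_of_lt_of_le hstep hmain
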